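/- Let Γ₁, Γ₂ be locally finite connected graphs with Floyd scaling functions f₁, f₂, and let φ : Γ₁ → Γ₂ be a c-quasi-isometric map (for c ∈ ℕ). If there is D > 0 with f₂(n)/f₁(cn) < D for all n, then φ is Lipschitz with respect to the Floyd metrics: there exists ε > 0 such that δ_{f₂}(φ(x), φ(y)) ≤ (1/ε) · δ_{f₁}(x, y) for all vertices x, y of Γ₁. Consequently φ extends to a Lipschitz map between the Floyd completions. -/

import Mathlib

open Filter Topology

/-- The vertex set of a locally finite connected graph, presented via its
graph metric `d` (an integer-valued geodesic metric with finite balls). -/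
structure GraphDist (V : Type) where
  d : V → V → ℕ
  d_self : ∀ x, d x x = 0
  eq_of_d : ∀ x y, d x y = 0 → x = y
  d_symm : ∀ x y, d x y = d y x
  d_tri : ∀ x y z, d x z ≤ d x y + d y z
  locallyFinite : ∀ (x : V) (n : ℕ), {y | d x y ≤ n}.Finite
  geodesic : ∀ x y, 0 < d x y → ∃ z, d x z = 1 ∧ d z y + 1 = d x y

namespace GraphDist

variable {V : Type} (G : GraphDist V)

/-- `γ : Fin (n+1) → V` is an edge path (consecutive vertices at distance `≤ 1`). -/
def IsPath {n : ℕ} (γ : Fin (n + 1) → V) : Prop :=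
  ∀ i : Fin n, G.d (γ i.castSucc) (γ i.succ) ≤ 1


theorem exists_geo : ∀ (n : ℕ) (x y : V), G.d x y = n →
    ∃ γ : Fin (n+1) → V, G.IsPath γ ∧ γ 0 = x ∧ γ (Fin.last n) = y ∧
      ∀ i : Fin (n+1), G.d x (γ i) ≤ i := by
  intro n
  induction n with
  | zero =>
    intro x y h
    refine ⟨fun _ => x, fun i => i.elim0, rfl, (G.eq_of_d x y h).symm ▸ rfl, ?_⟩
    intro i; simp [G.d_self]
  | succ n ih =>
    intro x y h
    obtain ⟨z, hz1, hz2⟩ := G.geodesic x y (h ▸ n.succ_pos)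
    obtain ⟨γ', hp', h0', hl', hd'⟩ := ih z y (by omega)
    refine ⟨Fin.cases x γ', ?_, by simp, ?_, ?_⟩
    · intro i
      induction i using Fin.cases with
      | zero =>
        beta_reduce
        rw [show ((0:Fin (n+1)).castSucc) = (0:Fin (n+2)) from rfl, Fin.cases_zero,
          Fin.cases_succ, h0']
        exact hz1.le
      | succ j =>
        have e1 : (j.succ : Fin (n+1)).castSucc = (j.castSucc : Fin (n+1)).succ := by
          exact Fin.ext rfl
        beta_reduce
        rw [e1, Fin.cases_succ, Fin.cases_succ]
        exact hp' j
    · beta_reduce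
      rw [← Fin.succ_last, Fin.cases_succ, hl']
    · intro i
      induction i using Fin.cases with
      | zero => simp [G.d_self]
      | succ j =>
        beta_reduce
        rw [Fin.cases_succ]
        calc G.d x (γ' j) ≤ G.d x z + G.d z (γ' j) := G.d_tri _ _ _
          _ ≤ 1 + j := by have := hd' j; omega
          _ ≤ (j.succ : Fin (n+2)) := by simp [Fin.val_succ]; omega


/-- Floyd length of a path with respect to the scaling function `f` and
basepoint `v`: the edge `{x,y}` has length `f (d v {x,y})`. -/
def floydLen (f : ℕ → ℝ) (v : V) {n : ℕ} (γ : Fin (n + 1) → V) : ℝ :=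
  ∑ i : Fin n, f (min (G.d v (γ i.castSucc)) (G.d v (γ i.succ)))

/-- Floyd distance: infimal Floyd length of edge paths joining two vertices. -/
noncomputable def floydDist (f : ℕ → ℝ) (v : V) (a b : V) : ℝ :=
  sInf {L | ∃ (n : ℕ) (γ : Fin (n + 1) → V), G.IsPath γ ∧ γ 0 = a ∧
    γ (Fin.last n) = b ∧ L = G.floydLen f v γ}

theorem floydLen_nonneg {f : ℕ → ℝ} (hf : ∀ n, 0 < f n) (v : V) {n : ℕ}
    (γ : Fin (n + 1) → V) : 0 ≤ G.floydLen f v γ :=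
  Finset.sum_nonneg fun i _ => (hf _).le

theorem floydSet_nonempty (f : ℕ → ℝ) (v : V) (a b : V) :
    Set.Nonempty {L | ∃ (n : ℕ) (γ : Fin (n + 1) → V), G.IsPath γ ∧ γ 0 = a ∧
      γ (Fin.last n) = b ∧ L = G.floydLen f v γ} := by
  obtain ⟨γ, hp, h0, hl, _⟩ := G.exists_geo (G.d a b) a b rfl
  exact ⟨_, _, γ, hp, h0, hl, rfl⟩

theorem floydSet_bdd {f : ℕ → ℝ} (hf : ∀ n, 0 < f n) (v : V) (a b : V) :
    BddBelow {L | ∃ (n : ℕ) (γ : Fin (n + 1) → V), G.IsPath γ ∧ γ 0 = a ∧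
      γ (Fin.last n) = b ∧ L = G.floydLen f v γ} := by
  refine ⟨0, fun L hL => ?_⟩
  obtain ⟨n, γ, _, _, _, rfl⟩ := hL
  exact G.floydLen_nonneg hf v γ

theorem floydDist_le {f : ℕ → ℝ} (hf : ∀ n, 0 < f n) (v : V) {a b : V} {n : ℕ}
    {γ : Fin (n + 1) → V} (hp : G.IsPath γ) (h0 : γ 0 = a) (hl : γ (Fin.last n) = b) :
    G.floydDist f v a b ≤ G.floydLen f v γ :=
  csInf_le (G.floydSet_bdd hf v a b) ⟨n, γ, hp, h0, hl, rfl⟩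

theorem floydDist_triangle {f : ℕ → ℝ} (hf : ∀ n, 0 < f n) (v : V) (a b cc : V) :
    G.floydDist f v a cc ≤ G.floydDist f v a b + G.floydDist f v b cc := by
  rw [← sub_le_iff_le_add']
  apply le_csInf (G.floydSet_nonempty f v b cc)
  rintro L2 ⟨n2, γ2, hp2, h02, hl2, rfl⟩
  rw [sub_le_iff_le_add']
  rw [← sub_le_iff_le_add]
  apply le_csInf (G.floydSet_nonempty f v a b)
  rintro L1 ⟨n1, γ1, hp1, h01, hl1, rfl⟩
  rw [sub_le_iff_le_add]
  -- concatenate γ1 and γ2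
  set γ : Fin (n1 + n2 + 1) → V := fun i =>
    if h : (i : ℕ) < n1 then γ1 ⟨i, by omega⟩ else γ2 ⟨(i : ℕ) - n1, by omega⟩ with hγ
  have hle : ∀ (i : Fin (n1 + n2 + 1)) (h : (i : ℕ) ≤ n1), γ i = γ1 ⟨i, by omega⟩ := by
    intro i h
    rcases lt_or_eq_of_le h with h' | h'
    · simp [hγ, h']
    · simp only [hγ, h', lt_irrefl, dif_neg, not_false_iff, Nat.sub_self]
      rw [Fin.mk_zero, h02, ← hl1]
      congr 1
  have hge : ∀ (i : Fin (n1 + n2 + 1)) (h : n1 ≤ (i : ℕ)), γ i = γ2 ⟨(i : ℕ) - n1, by omega⟩ := by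
    intro i h
    rcases lt_or_eq_of_le h with h' | h'
    · simp [hγ, Nat.not_lt.mpr h'.le, not_lt_of_ge h'.le]
    · have : ¬ ((i : ℕ) < n1) := by omega
      simp [hγ, this]
  have hpath : G.IsPath γ := by
    intro i
    rcases Nat.lt_or_ge (i : ℕ) n1 with h | h
    · rw [hle i.castSucc (by simp only [Fin.coe_castSucc]; omega),
        hle i.succ (by simp only [Fin.val_succ]; omega)]
      have := hp1 ⟨(i : ℕ), h⟩
      convert this using 3 <;> simp [Fin.ext_iff, Fin.val_succ]
    · rw [hge i.castSucc (by simp only [Fin.coe_castSucc]; omega),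
        hge i.succ (by simp only [Fin.val_succ]; omega)]
      have := hp2 ⟨(i : ℕ) - n1, by omega⟩
      convert this using 3 <;> simp [Fin.ext_iff, Fin.val_succ] <;> omega
  have h0 : γ 0 = a := by
    rw [hle 0 (by simp)]; simp only [Fin.val_zero, Fin.mk_zero]; exact h01
  have hl : γ (Fin.last (n1 + n2)) = cc := by
    rw [hge (Fin.last (n1+n2)) (by simp [Fin.last]), ← hl2]
    congr 1; simp [Fin.ext_iff, Fin.last]
  have hlen : G.floydLen f v γ = G.floydLen f v γ1 + G.floydLen f v γ2 := by
    unfold floydLen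
    rw [Fin.sum_univ_add (f := fun i : Fin (n1+n2) =>
      f (min (G.d v (γ i.castSucc)) (G.d v (γ i.succ))))]
    congr 1
    · apply Finset.sum_congr rfl
      intro i _
      rw [hle (Fin.castAdd n2 i).castSucc
          (by have := i.isLt; simp only [Fin.coe_castSucc, Fin.coe_castAdd]; omega),
        hle (Fin.castAdd n2 i).succ
          (by have := i.isLt; simp only [Fin.val_succ, Fin.coe_castAdd]; omega)]
      congr 2 <;> congr 1 <;> simp [Fin.ext_iff, Fin.val_succ]
    · apply Finset.sum_congr rfl
      intro i _
      rw [hge (Fin.natAdd n1 i).castSucc (by simp),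
        hge (Fin.natAdd n1 i).succ (by simp only [Fin.val_succ, Fin.coe_natAdd]; omega)]
      congr 2 <;> congr 1 <;> (apply congrArg; apply Fin.ext; simp [Fin.val_succ]; try omega)
  calc G.floydDist f v a cc ≤ G.floydLen f v γ := G.floydDist_le hf v hpath h0 hl
    _ = _ := hlen

/-- A finite `c`-quasigeodesic path. -/
def IsQuasigeodesic (c : ℝ) {n : ℕ} (γ : Fin (n + 1) → V) : Prop :=
  G.IsPath γ ∧ ∀ s t : Fin (n + 1),
    (1 / c) * |(s : ℝ) - (t : ℝ)| - c ≤ (G.d (γ s) (γ t) : ℝ) ∧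
    (G.d (γ s) (γ t) : ℝ) ≤ c * |(s : ℝ) - (t : ℝ)| + c

/-- A `c`-quasigeodesic ray. -/
def IsQuasigeodesicRay (c : ℝ) (γ : ℕ → V) : Prop :=
  (∀ n : ℕ, G.d (γ n) (γ (n + 1)) ≤ 1) ∧ ∀ s t : ℕ,
    (1 / c) * |(s : ℝ) - (t : ℝ)| - c ≤ (G.d (γ s) (γ t) : ℝ) ∧
    (G.d (γ s) (γ t) : ℝ) ≤ c * |(s : ℝ) - (t : ℝ)| + c

/-- A finite `α`-distorted (`α`-geodesic) path. -/
def IsAlphaPath (α : ℕ → ℝ) {n : ℕ} (γ : Fin (n + 1) → V) : Prop :=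
  G.IsPath γ ∧ ∀ s t : Fin (n + 1),
    (G.d (γ s) (γ t) : ℝ) ≤ α (Nat.dist s t) ∧
    (Nat.dist (s : ℕ) (t : ℕ) : ℝ) ≤ α (G.d (γ s) (γ t))

/-- An `α`-geodesic ray. -/
def IsAlphaRay (α : ℕ → ℝ) (γ : ℕ → V) : Prop :=
  (∀ n : ℕ, G.d (γ n) (γ (n + 1)) ≤ 1) ∧ ∀ s t : ℕ,
    (G.d (γ s) (γ t) : ℝ) ≤ α (Nat.dist s t) ∧
    (Nat.dist s t : ℝ) ≤ α (G.d (γ s) (γ t))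

end GraphDist

/-- `f` is a Floyd scaling function with ratio constant `K`. -/
def IsFloydFunction (f : ℕ → ℝ) (K : ℝ) : Prop :=
  (∀ n, 0 < f n) ∧ (∀ n, 1 ≤ f n / f (n + 1) ∧ f n / f (n + 1) ≤ K) ∧ Summable f

/-- `α` is a distortion function: non-decreasing with `α n ≥ n`. -/
def IsDistortion (α : ℕ → ℝ) : Prop :=
  (∀ n, 0 < α n) ∧ Monotone α ∧ ∀ n : ℕ, (n : ℝ) ≤ α n


theorem floyd_antitone {f : ℕ → ℝ} {K : ℝ} (hf : IsFloydFunction f K) : Antitone f := by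
  apply antitone_nat_of_succ_le
  intro n
  have h1 := (hf.2.1 n).1
  have hp := hf.1 (n+1)
  rw [le_div_iff₀ hp] at h1
  linarith

theorem floyd_pow {f : ℕ → ℝ} {K : ℝ} (hf : IsFloydFunction f K) (hK : 0 < K) :
    ∀ n j : ℕ, f n ≤ K ^ j * f (n + j) := by
  intro n j
  induction j with
  | zero => simp
  | succ j ih =>
    have h2 := (hf.2.1 (n+j)).2
    have hp := hf.1 (n+j+1)
    rw [div_le_iff₀ hp] at h2
    calc f n ≤ K ^ j * f (n + j) := ih
      _ ≤ K ^ j * (K * f (n + j + 1)) := by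
          apply mul_le_mul_of_nonneg_left _ (pow_nonneg hK.le j); linarith
      _ = K ^ (j+1) * f (n + (j+1)) := by
          have e : n + (j+1) = n + j + 1 := rfl
          rw [e, pow_succ]; ring

/-- a `c`-quasi-isometric map `φ : Γ₁ → Γ₂` between locally finite
connected graphs with Floyd scaling functions satisfying `f₂(n)/f₁(cn) < D` is
Lipschitz for the Floyd metrics: there is `ε > 0` with
`δ_{f₂}(φ x, φ y) ≤ (1/ε) δ_{f₁}(x, y)`; consequently it extends to a Lipschitz
map between the Floyd completions. -/
theorem stmt9 {V₁ V₂ : Type} (G₁ : GraphDist V₁) (G₂ : GraphDist V₂)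
    (v₁ : V₁) (v₂ : V₂)
    (f₁ f₂ : ℕ → ℝ) (K₁ K₂ : ℝ) (hK₁ : 0 < K₁) (hK₂ : 0 < K₂)
    (hf₁ : IsFloydFunction f₁ K₁) (hf₂ : IsFloydFunction f₂ K₂)
    (c : ℕ) (hc : 0 < c) (φ : V₁ → V₂)
    (hφ : ∀ x y : V₁,
      (1 / (c : ℝ)) * (G₁.d x y : ℝ) - c ≤ (G₂.d (φ x) (φ y) : ℝ) ∧
      (G₂.d (φ x) (φ y) : ℝ) ≤ c * (G₁.d x y : ℝ) + c)
    (D : ℝ) (hD : 0 < D) (hcmp : ∀ n : ℕ, f₂ n / f₁ (c * n) < D) :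
    ∃ ε : ℝ, 0 < ε ∧ ∀ x y : V₁,
      G₂.floydDist f₂ v₂ (φ x) (φ y) ≤ (1 / ε) * G₁.floydDist f₁ v₁ x y := by
  classical
  have hc' : (0:ℝ) < c := by exact_mod_cast hc
  have hK₁1 : 1 ≤ K₁ := le_trans (hf₁.2.1 0).1 (hf₁.2.1 0).2
  set R : ℕ := G₂.d v₂ (φ v₁) with hR
  set A : ℕ := 3*c*c + c*R with hA
  set E : ℝ := D * K₁ ^ A with hE
  have hEpos : 0 < E := mul_pos hD (pow_pos (lt_of_lt_of_le one_pos hK₁1) A)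
  set C : ℝ := 2 * c * E with hC
  have hCpos : 0 < C := by positivity
  refine ⟨1 / C, by positivity, ?_⟩
  rw [one_div_one_div]
  -- key single-edge estimate
  have key : ∀ a b : V₁, G₁.d a b ≤ 1 →
      G₂.floydDist f₂ v₂ (φ a) (φ b) ≤ C * f₁ (min (G₁.d v₁ a) (G₁.d v₁ b)) := by
    intro a b hab
    set n : ℕ := G₂.d (φ a) (φ b) with hn
    have hn2c : n ≤ 2 * c := by
      have h2 := (hφ a b).2
      have hab' : (G₁.d a b : ℝ) ≤ 1 := by exact_mod_cast hab
      have : (n : ℝ) ≤ 2 * c := by nlinarith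
      exact_mod_cast this
    obtain ⟨γ, hp, h0, hl, hd⟩ := G₂.exists_geo n (φ a) (φ b) rfl
    set m : ℕ := min (G₁.d v₁ a) (G₁.d v₁ b) with hm
    have hda : G₁.d v₁ a ≤ c * G₂.d (φ v₁) (φ a) + c * c := by
      have h1 := (hφ v₁ a).1
      have : (G₁.d v₁ a : ℝ) ≤ c * G₂.d (φ v₁) (φ a) + c * c := by
        rw [div_mul_eq_mul_div, sub_le_iff_le_add, div_le_iff₀ hc'] at h1
        nlinarith
      exact_mod_cast this
    -- bound each edge term
    have term : ∀ i : Fin n,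
        f₂ (min (G₂.d v₂ (γ i.castSucc)) (G₂.d v₂ (γ i.succ))) ≤ E * f₁ m := by
      intro i
      set k : ℕ := min (G₂.d v₂ (γ i.castSucc)) (G₂.d v₂ (γ i.succ)) with hk
      have hmk : m ≤ c * k + A := by
        have t1 : G₂.d v₂ (φ a) ≤ k + 2*c := by
          have u1 : G₂.d v₂ (φ a) ≤ G₂.d v₂ (γ i.castSucc) + G₂.d (γ i.castSucc) (φ a) :=
            G₂.d_tri _ _ _
          have u1' : G₂.d v₂ (φ a) ≤ G₂.d v₂ (γ i.succ) + G₂.d (γ i.succ) (φ a) :=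
            G₂.d_tri _ _ _
          have u2 : G₂.d (γ i.castSucc) (φ a) = G₂.d (φ a) (γ i.castSucc) := G₂.d_symm _ _
          have u2' : G₂.d (γ i.succ) (φ a) = G₂.d (φ a) (γ i.succ) := G₂.d_symm _ _
          have u3 : G₂.d (φ a) (γ i.castSucc) ≤ n := le_trans (hd i.castSucc)
            (by have := i.castSucc.isLt; omega)
          have u3' : G₂.d (φ a) (γ i.succ) ≤ n := le_trans (hd i.succ)
            (by have := i.succ.isLt; omega)
          have hk' : k = min (G₂.d v₂ (γ i.castSucc)) (G₂.d v₂ (γ i.succ)) := hk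
          omega
        have t2 : G₂.d (φ v₁) (φ a) ≤ R + G₂.d v₂ (φ a) := by
          have := G₂.d_tri (φ v₁) v₂ (φ a)
          have e := G₂.d_symm (φ v₁) v₂
          omega
        have t3 : m ≤ G₁.d v₁ a := min_le_left _ _
        calc m ≤ c * G₂.d (φ v₁) (φ a) + c * c := le_trans t3 hda
          _ ≤ c * (R + (k + 2*c)) + c * c := by
              have : G₂.d (φ v₁) (φ a) ≤ R + (k + 2*c) := by omega
              nlinarith [this]
          _ ≤ c * k + A := by rw [hA]; ring_nf; omega
      have s1 : f₂ k ≤ D * f₁ (c * k) := by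
        have := hcmp k
        have hp1 := hf₁.1 (c * k)
        rw [div_lt_iff₀ hp1] at this
        linarith
      have s2 : f₁ (c * k) ≤ K₁ ^ A * f₁ (c * k + A) := floyd_pow hf₁ (by linarith) (c*k) A
      have s3 : f₁ (c * k + A) ≤ f₁ m := floyd_antitone hf₁ hmk
      calc f₂ k ≤ D * f₁ (c * k) := s1
        _ ≤ D * (K₁ ^ A * f₁ (c * k + A)) := by
            apply mul_le_mul_of_nonneg_left s2 hD.le
        _ ≤ D * (K₁ ^ A * f₁ m) := by
            apply mul_le_mul_of_nonneg_left _ hD.le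
            exact mul_le_mul_of_nonneg_left s3 (pow_nonneg (by linarith) A)
        _ = E * f₁ m := by rw [hE]; ring
    have hf1m : 0 < f₁ m := hf₁.1 m
    calc G₂.floydDist f₂ v₂ (φ a) (φ b) ≤ G₂.floydLen f₂ v₂ γ :=
          G₂.floydDist_le hf₂.1 v₂ hp h0 hl
      _ ≤ ∑ _i : Fin n, E * f₁ m := Finset.sum_le_sum fun i _ => term i
      _ = n * (E * f₁ m) := by rw [Finset.sum_const]; simp [mul_comm]
      _ ≤ (2*c) * (E * f₁ m) := by
          apply mul_le_mul_of_nonneg_right _ (by positivity)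
          exact_mod_cast hn2c
      _ = C * f₁ m := by rw [hC]; push_cast; ring
  -- iterate along a path
  have iter : ∀ (n : ℕ) (γ : Fin (n+1) → V₁), G₁.IsPath γ →
      G₂.floydDist f₂ v₂ (φ (γ 0)) (φ (γ (Fin.last n))) ≤ C * G₁.floydLen f₁ v₁ γ := by
    intro n
    induction n with
    | zero =>
      intro γ _
      have e : γ (Fin.last 0) = γ 0 := rfl
      rw [e]
      have : G₂.floydDist f₂ v₂ (φ (γ 0)) (φ (γ 0)) ≤ 0 := by
        have h := G₂.floydDist_le (f := f₂) hf₂.1 v₂ (a := φ (γ 0)) (b := φ (γ 0))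
          (n := 0) (γ := fun _ => φ (γ 0)) (fun i => i.elim0) rfl rfl
        simpa [GraphDist.floydLen] using h
      have hlen : G₁.floydLen f₁ v₁ γ = 0 := by simp [GraphDist.floydLen]
      rw [hlen, mul_zero]
      exact this
    | succ n ih =>
      intro γ hpth
      set γ' : Fin (n+1) → V₁ := fun i => γ i.succ with hγ'
      have hpth' : G₁.IsPath γ' := by
        intro i
        have := hpth i.succ
        have e1 : γ' i.castSucc = γ i.succ.castSucc := by
          rw [hγ']; beta_reduce; rw [Fin.succ_castSucc]
        have e2 : γ' i.succ = γ i.succ.succ := rfl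
        rw [e1, e2]; exact this
      have h0' : γ' 0 = γ 1 := rfl
      have hl' : γ' (Fin.last n) = γ (Fin.last (n+1)) := by
        rw [hγ']; beta_reduce; rw [Fin.succ_last]
      have hedge := key (γ 0) (γ 1) (by
        have := hpth 0
        have e : (0 : Fin (n+1)).castSucc = (0 : Fin (n+2)) := rfl
        have e2 : (0 : Fin (n+1)).succ = (1 : Fin (n+2)) := rfl
        rwa [e, e2] at this)
      have hih := ih γ' hpth'
      rw [h0', hl'] at hih
      have htri := G₂.floydDist_triangle hf₂.1 v₂ (φ (γ 0)) (φ (γ 1)) (φ (γ (Fin.last (n+1))))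
      have hsplit : G₁.floydLen f₁ v₁ γ =
          f₁ (min (G₁.d v₁ (γ 0)) (G₁.d v₁ (γ 1))) + G₁.floydLen f₁ v₁ γ' := by
        unfold GraphDist.floydLen
        rw [Fin.sum_univ_succ]
        congr 1
      rw [hsplit]
      calc G₂.floydDist f₂ v₂ (φ (γ 0)) (φ (γ (Fin.last (n+1))))
          ≤ G₂.floydDist f₂ v₂ (φ (γ 0)) (φ (γ 1)) +
            G₂.floydDist f₂ v₂ (φ (γ 1)) (φ (γ (Fin.last (n+1)))) := htri
        _ ≤ C * f₁ (min (G₁.d v₁ (γ 0)) (G₁.d v₁ (γ 1))) + C * G₁.floydLen f₁ v₁ γ' := by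
            exact add_le_add hedge hih
        _ = C * (f₁ (min (G₁.d v₁ (γ 0)) (G₁.d v₁ (γ 1))) + G₁.floydLen f₁ v₁ γ') := by ring
  -- conclude
  intro x y
  rw [← div_le_iff₀' hCpos]
  show _ ≤ sInf _
  apply le_csInf (G₁.floydSet_nonempty f₁ v₁ x y)
  rintro L ⟨n, γ, hpth, h0, hl, rfl⟩
  rw [div_le_iff₀' hCpos]
  have := iter n γ hpth
  rw [h0, hl] at this
  exact this
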